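/- Fix positive integers a, b and a nonnegative integer s. Let Ω = 1 + Σ_{n≥1} Ω_n t^n be a formal power series in t with coefficients in ℚ[x] satisfying Ω' = x·Ω^{b+1} + a·t·Ω^b·Ω', and let Φ = 1 + Σ_{n≥1} Φ_n t^n be the unique formal power series with constant term 1 satisfying Φ(t) = Ω(t·Φ(t)^s). Then for every n ≥ 1, Φ_n = (x/n!) · ∏_{i=1}^{n−1} (a·i + b·x·(n−i) + (s·n+1)·x). -/

import Mathlib

noncomputable section
namespace SZ

variable {A : Type*} [CommRing A] [Algebra ℚ A]

/-- The basic family `A_n(z) = z/n! ∏_{i=1}^{n-1} (z + nβ - iD)` (with `A_0 = 1`). -/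
def Af (β Dd : A) (n : ℕ) (z : A) : A :=
  if n = 0 then 1 else
    (n.factorial : ℚ)⁻¹ • (z * ∏ i ∈ Finset.Icc 1 (n-1), (z + (n : A) * β - (i : A) * Dd))

/-- The companion family `C_n(z) = 1/(n-1)! ∏_{i=1}^{n-1} (z + nβ - iD)` (with `C_0 = 0`). -/
def Cf (β Dd : A) (n : ℕ) (z : A) : A :=
  if n = 0 then 0 else
    ((n-1).factorial : ℚ)⁻¹ • ∏ i ∈ Finset.Icc 1 (n-1), (z + (n : A) * β - (i : A) * Dd)

@[simp] lemma Af_zero (β Dd z : A) : Af β Dd 0 z = 1 := rfl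
@[simp] lemma Cf_zero (β Dd z : A) : Cf β Dd 0 z = 0 := rfl
@[simp] lemma Af_one (β Dd z : A) : Af β Dd 1 z = z := by simp [Af]
@[simp] lemma Cf_one (β Dd z : A) : Cf β Dd 1 z = 1 := by simp [Cf]

lemma Af_apply_zero (β Dd : A) {n : ℕ} (hn : n ≠ 0) : Af β Dd n 0 = 0 := by
  simp [Af, hn]

/-- `n A_n(z) = z C_n(z)`. -/
lemma nsmul_Af (β Dd : A) (n : ℕ) (z : A) : (n : A) * Af β Dd n z = z * Cf β Dd n z := by
  rcases n with _ | m
  · simp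
  · simp only [Af, Cf, Nat.succ_ne_zero, if_false, Nat.add_sub_cancel]
    rw [← nsmul_eq_mul, ← Nat.cast_smul_eq_nsmul ℚ (m+1)
      ((((m+1).factorial : ℚ))⁻¹ • (z * ∏ i ∈ Finset.Icc 1 m, (z + ((m+1 : ℕ) : A) * β - (i : A) * Dd))),
      smul_smul, mul_smul_comm]
    congr 1
    rw [Nat.factorial_succ]
    push_cast
    rw [mul_inv, ← mul_assoc, mul_inv_cancel₀ (by positivity), one_mul]
end SZ

namespace SZ
variable {A : Type*} [CommRing A] [Algebra ℚ A]

lemma prod_Icc_one (f : ℕ → A) (m : ℕ) :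
    ∏ i ∈ Finset.Icc 1 m, f i = ∏ i ∈ Finset.range m, f (i+1) := by
  rw [← Finset.Ico_add_one_right_eq_Icc, Finset.prod_Ico_eq_prod_range]
  simp [add_comm]

lemma Af_succ (β Dd : A) (k : ℕ) (z : A) :
    Af β Dd (k+1) z = ((k+1).factorial : ℚ)⁻¹ •
      (z * ∏ i ∈ Finset.range k, (z + ((k+1 : ℕ) : A) * β - ((i+1 : ℕ) : A) * Dd)) := by
  simp only [Af, Nat.succ_ne_zero, if_false, Nat.add_sub_cancel, prod_Icc_one]

lemma Cf_succ (β Dd : A) (k : ℕ) (z : A) :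
    Cf β Dd (k+1) z = (k.factorial : ℚ)⁻¹ •
      (∏ i ∈ Finset.range k, (z + ((k+1 : ℕ) : A) * β - ((i+1 : ℕ) : A) * Dd)) := by
  simp only [Cf, Nat.succ_ne_zero, if_false, Nat.add_sub_cancel, prod_Icc_one]

lemma fact_succ_smul (k : ℕ) (w : A) :
    (((k+1).factorial : ℚ))⁻¹ • (((k+1 : ℕ) : A) * w) = ((k.factorial : ℚ))⁻¹ • w := by
  rw [← nsmul_eq_mul, ← Nat.cast_smul_eq_nsmul ℚ, smul_smul]
  congr 1
  rw [Nat.factorial_succ]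
  push_cast
  rw [mul_inv, mul_comm ((k:ℚ)+1)⁻¹, mul_assoc, inv_mul_cancel₀ (by positivity), mul_one]

lemma Af_delta (β Dd : A) (k : ℕ) (z : A) :
    Af β Dd (k+1) z - Af β Dd (k+1) (z - Dd) = Dd * Af β Dd k (z + β - Dd) := by
  rcases k with _ | j
  · simp
  · set g : ℕ → A := fun i => z + ((j+2 : ℕ) : A) * β - (i : A) * Dd with hg
    have e1 : ∏ i ∈ Finset.range (j+1), (z + ((j+1+1 : ℕ) : A) * β - ((i+1 : ℕ) : A) * Dd)
        = ∏ i ∈ Finset.range (j+1), g (i+1) :=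
      Finset.prod_congr rfl (fun i _ => by simp only [hg]; all_goals (push_cast; try ring))
    have e2 : ∏ i ∈ Finset.range (j+1), (z - Dd + ((j+1+1 : ℕ) : A) * β - ((i+1 : ℕ) : A) * Dd)
        = ∏ i ∈ Finset.range (j+1), g (i+1+1) :=
      Finset.prod_congr rfl (fun i _ => by simp only [hg]; all_goals (push_cast; try ring))
    have e3 : ∏ i ∈ Finset.range j, (z + β - Dd + ((j+1 : ℕ) : A) * β - ((i+1 : ℕ) : A) * Dd)
        = ∏ i ∈ Finset.range j, g (i+1+1) :=
      Finset.prod_congr rfl (fun i _ => by simp only [hg]; all_goals (push_cast; try ring))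
    rw [Af_succ, Af_succ, Af_succ, e1, e2, e3, Finset.prod_range_succ' (fun i => g (i+1)),
      Finset.prod_range_succ (fun i => g (i+1+1)), ← smul_sub]
    set N : A := ∏ i ∈ Finset.range j, g (i+1+1) with hN
    have h4 : z * (N * g (0+1)) - (z - Dd) * (N * g (j+1+1))
        = ((j+2 : ℕ) : A) * (Dd * ((z + β - Dd) * N)) := by
      simp only [hg]
      push_cast
      ring
    rw [h4, fact_succ_smul, mul_smul_comm]

lemma Cf_delta (β Dd : A) (k : ℕ) (z : A) :
    Cf β Dd (k+1) z - Cf β Dd (k+1) (z - Dd) = Dd * Cf β Dd k (z + β - Dd) := by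
  rcases k with _ | j
  · simp
  · set g : ℕ → A := fun i => z + ((j+2 : ℕ) : A) * β - (i : A) * Dd with hg
    have e1 : ∏ i ∈ Finset.range (j+1), (z + ((j+1+1 : ℕ) : A) * β - ((i+1 : ℕ) : A) * Dd)
        = ∏ i ∈ Finset.range (j+1), g (i+1) :=
      Finset.prod_congr rfl (fun i _ => by simp only [hg]; all_goals (push_cast; try ring))
    have e2 : ∏ i ∈ Finset.range (j+1), (z - Dd + ((j+1+1 : ℕ) : A) * β - ((i+1 : ℕ) : A) * Dd)
        = ∏ i ∈ Finset.range (j+1), g (i+1+1) :=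
      Finset.prod_congr rfl (fun i _ => by simp only [hg]; all_goals (push_cast; try ring))
    have e3 : ∏ i ∈ Finset.range j, (z + β - Dd + ((j+1 : ℕ) : A) * β - ((i+1 : ℕ) : A) * Dd)
        = ∏ i ∈ Finset.range j, g (i+1+1) :=
      Finset.prod_congr rfl (fun i _ => by simp only [hg]; all_goals (push_cast; try ring))
    rw [Cf_succ, Cf_succ, Cf_succ, e1, e2, e3, Finset.prod_range_succ' (fun i => g (i+1)),
      Finset.prod_range_succ (fun i => g (i+1+1)), ← smul_sub]
    set N : A := ∏ i ∈ Finset.range j, g (i+1+1) with hN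
    have h4 : N * g (0+1) - N * g (j+1+1) = ((j+1 : ℕ) : A) * (Dd * N) := by
      simp only [hg]
      push_cast
      ring
    rw [h4, fact_succ_smul, mul_smul_comm]

lemma star2 (β Dd : A) (k : ℕ) (z : A) :
    Af β Dd k (z + β - Dd) + β * Cf β Dd k (z + β - Dd) = Cf β Dd (k+1) z := by
  rcases k with _ | j
  · simp
  · set g : ℕ → A := fun i => z + ((j+2 : ℕ) : A) * β - (i : A) * Dd with hg
    have e1 : ∏ i ∈ Finset.range j, (z + β - Dd + ((j+1 : ℕ) : A) * β - ((i+1 : ℕ) : A) * Dd)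
        = ∏ i ∈ Finset.range j, g (i+1+1) :=
      Finset.prod_congr rfl (fun i _ => by simp only [hg]; all_goals (push_cast; try ring))
    have e2 : ∏ i ∈ Finset.range (j+1), (z + ((j+1+1 : ℕ) : A) * β - ((i+1 : ℕ) : A) * Dd)
        = ∏ i ∈ Finset.range (j+1), g (i+1) :=
      Finset.prod_congr rfl (fun i _ => by simp only [hg]; all_goals (push_cast; try ring))
    rw [Af_succ, Cf_succ, Cf_succ, e1, e2, Finset.prod_range_succ' (fun i => g (i+1))]
    set N : A := ∏ i ∈ Finset.range j, g (i+1+1) with hN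
    have h2 : N * g (0+1) = (z + β - Dd) * N + ((j+1 : ℕ) : A) * (β * N) := by
      simp only [hg]
      push_cast
      ring
    rw [h2, smul_add, fact_succ_smul, mul_smul_comm]

end SZ

namespace SZ
variable {A B : Type*} [CommRing A] [Algebra ℚ A] [CommRing B] [Algebra ℚ B]

lemma Af_map (φ : A →ₐ[ℚ] B) (β Dd : A) (n : ℕ) (z : A) :
    φ (Af β Dd n z) = Af (φ β) (φ Dd) n (φ z) := by
  rcases n with _ | m
  · simp
  · simp only [Af, Nat.succ_ne_zero, if_false, Nat.add_sub_cancel, map_smul, map_mul, map_prod,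
      map_add, map_sub, map_natCast]

lemma Cf_map (φ : A →ₐ[ℚ] B) (β Dd : A) (n : ℕ) (z : A) :
    φ (Cf β Dd n z) = Cf (φ β) (φ Dd) n (φ z) := by
  rcases n with _ | m
  · simp
  · simp only [Cf, Nat.succ_ne_zero, if_false, Nat.add_sub_cancel, map_smul, map_mul, map_prod,
      map_add, map_sub, map_natCast]

/-- A polynomial invariant under the shift `X ↦ X - D` (`D ≠ 0`) is constant. -/
lemma const_of_comp_shift {A : Type*} [CommRing A] [IsDomain A] [CharZero A]
    {Dd : A} (hD : Dd ≠ 0) {F : Polynomial A}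
    (h : F.comp (Polynomial.X - Polynomial.C Dd) = F) :
    F = Polynomial.C (F.eval 0) := by
  have hshift : ∀ p : A, F.eval (p - Dd) = F.eval p := by
    intro p
    conv_rhs => rw [← h]
    simp [Polynomial.eval_comp]
  have hiter : ∀ n : ℕ, F.eval (-(n : A) * Dd) = F.eval 0 := by
    intro n
    induction n with
    | zero => simp
    | succ m ih =>
      have : (-(((m+1) : ℕ) : A) * Dd) = (-(m : A) * Dd) - Dd := by push_cast; ring
      rw [this, hshift, ih]
  set G : Polynomial A := F - Polynomial.C (F.eval 0) with hG
  have hG0 : G = 0 := by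
    apply Polynomial.eq_zero_of_infinite_isRoot
    refine Set.infinite_of_injective_forall_mem
      (f := fun n : ℕ => -(n : A) * Dd) ?_ ?_
    · intro m n hmn
      simp only [neg_mul] at hmn
      have := neg_injective hmn
      exact Nat.cast_injective (mul_right_cancel₀ hD this)
    · intro n
      simp only [Set.mem_setOf_eq, Polynomial.IsRoot, hG, Polynomial.eval_sub,
        Polynomial.eval_C, hiter n, sub_self]
  have := sub_eq_zero.mp hG0
  exact this

end SZ

namespace SZ
open Polynomial in
/-- Transport of `Af` along `aeval`. -/
lemma Af_aeval {A : Type*} [CommRing A] [Algebra ℚ A] (β Dd : A) (n : ℕ)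
    (Z W : Polynomial A) :
    Polynomial.aeval W (Af (Polynomial.C β) (Polynomial.C Dd) n Z)
      = Af (Polynomial.C β) (Polynomial.C Dd) n (Polynomial.aeval W Z) := by
  have := Af_map ((Polynomial.aeval W : Polynomial A →ₐ[A] Polynomial A).restrictScalars ℚ)
    (Polynomial.C β) (Polynomial.C Dd) n Z
  simpa using this

lemma Cf_aeval {A : Type*} [CommRing A] [Algebra ℚ A] (β Dd : A) (n : ℕ)
    (Z W : Polynomial A) :
    Polynomial.aeval W (Cf (Polynomial.C β) (Polynomial.C Dd) n Z)
      = Cf (Polynomial.C β) (Polynomial.C Dd) n (Polynomial.aeval W Z) := by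
  have := Cf_map ((Polynomial.aeval W : Polynomial A →ₐ[A] Polynomial A).restrictScalars ℚ)
    (Polynomial.C β) (Polynomial.C Dd) n Z
  simpa using this

lemma Af_aeval' {A : Type*} [CommRing A] [Algebra ℚ A] (β Dd : A) (n : ℕ)
    (Z : Polynomial A) (w : A) :
    Polynomial.aeval w (Af (Polynomial.C β) (Polynomial.C Dd) n Z)
      = Af β Dd n (Polynomial.aeval w Z) := by
  have := Af_map ((Polynomial.aeval w : Polynomial A →ₐ[A] A).restrictScalars ℚ)
    (Polynomial.C β) (Polynomial.C Dd) n Z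
  simpa using this

lemma Cf_aeval' {A : Type*} [CommRing A] [Algebra ℚ A] (β Dd : A) (n : ℕ)
    (Z : Polynomial A) (w : A) :
    Polynomial.aeval w (Cf (Polynomial.C β) (Polynomial.C Dd) n Z)
      = Cf β Dd n (Polynomial.aeval w Z) := by
  have := Cf_map ((Polynomial.aeval w : Polynomial A →ₐ[A] A).restrictScalars ℚ)
    (Polynomial.C β) (Polynomial.C Dd) n Z
  simpa using this

end SZ

namespace SZ
variable {A : Type*} [CommRing A] [Algebra ℚ A] [IsDomain A] [CharZero A]

open Polynomial

lemma masterT (β σ Dd : A) (hD : Dd ≠ 0) :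
    ∀ k : ℕ, ∀ q : A,
      ∑ n ∈ Finset.range (k+1),
          Af (C β) (C Dd) n (X : Polynomial A) * C (Af (β+σ) Dd (k-n) (q + (n:A)*σ))
        = Af (C (β+σ)) (C Dd) k ((X : Polynomial A) + C q) := by
  intro k
  induction k with
  | zero => intro q; simp
  | succ k ih =>
    intro q
    set L : Polynomial A := ∑ n ∈ Finset.range (k+2),
      Af (C β) (C Dd) n (X : Polynomial A) * C (Af (β+σ) Dd (k+1-n) (q + (n:A)*σ)) with hL
    set R : Polynomial A := Af (C (β+σ)) (C Dd) (k+1) ((X : Polynomial A) + C q) with hR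
    -- the shift by X - C Dd
    have hLshift : L - Polynomial.aeval (X - C Dd) L
        = C Dd * (Af (C (β+σ)) (C Dd) k (X + C (β - Dd) + C (q + σ))) := by
      rw [hL, map_sum, ← Finset.sum_sub_distrib]
      have hterm : ∀ n ∈ Finset.range (k+2),
          (Af (C β) (C Dd) n (X : Polynomial A) * C (Af (β+σ) Dd (k+1-n) (q + (n:A)*σ))
            - Polynomial.aeval (X - C Dd)
              (Af (C β) (C Dd) n (X : Polynomial A) * C (Af (β+σ) Dd (k+1-n) (q + (n:A)*σ))))
          = (Af (C β) (C Dd) n X - Af (C β) (C Dd) n (X - C Dd))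
              * C (Af (β+σ) Dd (k+1-n) (q + (n:A)*σ)) := by
        intro n _
        rw [map_mul, Af_aeval, aeval_C]
        simp only [map_sub, aeval_X, aeval_C]
        ring_nf
        rw [Polynomial.algebraMap_eq]
        ring
      rw [Finset.sum_congr rfl hterm, Finset.sum_range_succ']
      have h0 : (Af (C β) (C Dd) 0 (X : Polynomial A) - Af (C β) (C Dd) 0 (X - C Dd))
          * C (Af (β+σ) Dd (k+1-0) (q + ((0:ℕ):A)*σ)) = 0 := by
        simp
      rw [h0, add_zero]
      have h1 : ∀ m ∈ Finset.range (k+1),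
          (Af (C β) (C Dd) (m+1) (X : Polynomial A) - Af (C β) (C Dd) (m+1) (X - C Dd))
              * C (Af (β+σ) Dd (k+1-(m+1)) (q + ((m+1:ℕ):A)*σ))
          = C Dd * (Af (C β) (C Dd) m (X + C (β - Dd))
              * C (Af (β+σ) Dd (k-m) ((q+σ) + (m:A)*σ))) := by
        intro m _
        rw [Af_delta]
        have e1 : (X : Polynomial A) + C β - C Dd = X + C (β - Dd) := by
          rw [map_sub]; ring
        have e2 : q + ((m+1:ℕ):A)*σ = (q+σ) + (m:A)*σ := by push_cast; ring
        have e3 : k+1-(m+1) = k-m := by omega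
        rw [e1, e2, e3]
        ring
      rw [Finset.sum_congr rfl h1, ← Finset.mul_sum]
      congr 1
      have := ih (q + σ)
      have happ := congrArg (Polynomial.aeval ((X : Polynomial A) + C (β - Dd))) this
      rw [map_sum] at happ
      have hsimp : ∀ n ∈ Finset.range (k+1),
          Polynomial.aeval ((X : Polynomial A) + C (β - Dd))
            (Af (C β) (C Dd) n (X : Polynomial A) * C (Af (β+σ) Dd (k-n) ((q+σ) + (n:A)*σ)))
          = Af (C β) (C Dd) n (X + C (β - Dd)) * C (Af (β+σ) Dd (k-n) ((q+σ) + (n:A)*σ)) := by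
        intro n _
        rw [map_mul, Af_aeval, aeval_C, aeval_X]
        rw [Polynomial.algebraMap_eq]
      rw [Finset.sum_congr rfl hsimp] at happ
      rw [happ, Af_aeval]
      simp only [map_add, aeval_X, aeval_C, Polynomial.algebraMap_eq]
    have hRshift : R - Polynomial.aeval (X - C Dd) R
        = C Dd * (Af (C (β+σ)) (C Dd) k (X + C (β - Dd) + C (q + σ))) := by
      rw [hR, Af_aeval]
      simp only [map_add, map_sub, aeval_X, aeval_C, Polynomial.algebraMap_eq]
      have e4 : (X : Polynomial A) - C Dd + C q = (X + C q) - C Dd := by ring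
      rw [e4, Af_delta]
      congr 1
      congr 1
      ring
    -- conclude L - R is shift-invariant, hence constant
    have hconst : (L - R) = C ((L - R).eval 0) := by
      apply const_of_comp_shift (Dd := Dd) hD
      rw [comp_eq_aeval, map_sub]
      have : Polynomial.aeval ((X : Polynomial A) - C Dd) L - Polynomial.aeval (X - C Dd) R
          = L - R + ((Polynomial.aeval (X - C Dd) L - L) - (Polynomial.aeval (X - C Dd) R - R)) := by
        ring
      rw [this]
      rw [show Polynomial.aeval ((X : Polynomial A) - C Dd) L - L = -(L - Polynomial.aeval (X - C Dd) L) by ring]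
      rw [show Polynomial.aeval ((X : Polynomial A) - C Dd) R - R = -(R - Polynomial.aeval (X - C Dd) R) by ring]
      rw [hLshift, hRshift]
      ring
    have heval : (L - R).eval 0 = 0 := by
      have hL0 : L.eval 0 = Af (β+σ) Dd (k+1) q := by
        have : L.eval 0 = Polynomial.aeval (0 : A) L := by
          rw [aeval_def, eval₂_at_zero]
          simp [Polynomial.eval]
        rw [this, hL, map_sum]
        have hsimp : ∀ n ∈ Finset.range (k+2),
            Polynomial.aeval (0:A)
              (Af (C β) (C Dd) n (X : Polynomial A) * C (Af (β+σ) Dd (k+1-n) (q + (n:A)*σ)))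
            = Af β Dd n 0 * (Af (β+σ) Dd (k+1-n) (q + (n:A)*σ)) := by
          intro n _
          rw [map_mul, Af_aeval', aeval_C, aeval_X]
          simp
        rw [Finset.sum_congr rfl hsimp]
        rw [Finset.sum_eq_single 0]
        · simp
        · intro m _ hm
          rw [Af_apply_zero _ _ hm, zero_mul]
        · intro h; simp at h
      have hR0 : R.eval 0 = Af (β+σ) Dd (k+1) q := by
        have : R.eval 0 = Polynomial.aeval (0 : A) R := by
          rw [aeval_def, eval₂_at_zero]
          simp [Polynomial.eval]
        rw [this, hR, Af_aeval']
        simp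
      rw [Polynomial.eval_sub, hL0, hR0, sub_self]
    rw [heval, map_zero] at hconst
    exact sub_eq_zero.mp hconst

end SZ

namespace SZ
variable {A : Type*} [CommRing A] [Algebra ℚ A] [IsDomain A] [CharZero A]
open Polynomial

set_option maxHeartbeats 800000 in
lemma heartT (β Dd : A) (hD : Dd ≠ 0) :
    ∀ k : ℕ, ∀ q : A,
      ∑ n ∈ Finset.range (k+1),
          Af (C β) (C Dd) n (X : Polynomial A) * C (Cf β Dd (k+1-n) q)
        = Cf (C β) (C Dd) (k+1) ((X : Polynomial A) + C q) := by
  intro k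
  induction k with
  | zero => intro q; simp
  | succ k ih =>
    intro q
    set L : Polynomial A := ∑ n ∈ Finset.range (k+2),
      Af (C β) (C Dd) n (X : Polynomial A) * C (Cf β Dd (k+2-n) q) with hL
    set R : Polynomial A := Cf (C β) (C Dd) (k+2) ((X : Polynomial A) + C q) with hR
    have hLshift : L - Polynomial.aeval (X - C Dd) L
        = C Dd * (Cf (C β) (C Dd) (k+1) (X + C (β - Dd) + C q)) := by
      rw [hL, map_sum, ← Finset.sum_sub_distrib]
      have hterm : ∀ n ∈ Finset.range (k+2),
          (Af (C β) (C Dd) n (X : Polynomial A) * C (Cf β Dd (k+2-n) q)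
            - Polynomial.aeval (X - C Dd)
              (Af (C β) (C Dd) n (X : Polynomial A) * C (Cf β Dd (k+2-n) q)))
          = (Af (C β) (C Dd) n X - Af (C β) (C Dd) n (X - C Dd))
              * C (Cf β Dd (k+2-n) q) := by
        intro n _
        rw [map_mul, Af_aeval, aeval_C]
        simp only [map_sub, aeval_X, aeval_C]
        ring_nf
        rw [Polynomial.algebraMap_eq]
        ring
      rw [Finset.sum_congr rfl hterm, Finset.sum_range_succ']
      have h0 : (Af (C β) (C Dd) 0 (X : Polynomial A) - Af (C β) (C Dd) 0 (X - C Dd))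
          * C (Cf β Dd (k+2-0) q) = 0 := by simp
      rw [h0, add_zero]
      have h1 : ∀ m ∈ Finset.range (k+1),
          (Af (C β) (C Dd) (m+1) (X : Polynomial A) - Af (C β) (C Dd) (m+1) (X - C Dd))
              * C (Cf β Dd (k+2-(m+1)) q)
          = C Dd * (Af (C β) (C Dd) m (X + C (β - Dd)) * C (Cf β Dd (k+1-m) q)) := by
        intro m _
        rw [Af_delta]
        have e1 : (X : Polynomial A) + C β - C Dd = X + C (β - Dd) := by
          rw [map_sub]; ring
        have e3 : k+2-(m+1) = k+1-m := by omega
        rw [e1, e3]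
        ring
      rw [Finset.sum_congr rfl h1, ← Finset.mul_sum]
      congr 1
      have := ih q
      have happ := congrArg (Polynomial.aeval ((X : Polynomial A) + C (β - Dd))) this
      rw [map_sum] at happ
      have hsimp : ∀ n ∈ Finset.range (k+1),
          Polynomial.aeval ((X : Polynomial A) + C (β - Dd))
            (Af (C β) (C Dd) n (X : Polynomial A) * C (Cf β Dd (k+1-n) q))
          = Af (C β) (C Dd) n (X + C (β - Dd)) * C (Cf β Dd (k+1-n) q) := by
        intro n _
        rw [map_mul, Af_aeval, aeval_C, aeval_X]
        rw [Polynomial.algebraMap_eq]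
      rw [Finset.sum_congr rfl hsimp] at happ
      rw [happ, Cf_aeval]
      simp only [map_add, aeval_X, aeval_C, Polynomial.algebraMap_eq]
    have hRshift : R - Polynomial.aeval (X - C Dd) R
        = C Dd * (Cf (C β) (C Dd) (k+1) (X + C (β - Dd) + C q)) := by
      rw [hR, Cf_aeval]
      simp only [map_add, map_sub, aeval_X, aeval_C, Polynomial.algebraMap_eq]
      have e4 : (X : Polynomial A) - C Dd + C q = (X + C q) - C Dd := by ring
      rw [e4, Cf_delta]
      congr 1
      congr 1
      ring
    have hconst : (L - R) = C ((L - R).eval 0) := by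
      apply const_of_comp_shift (Dd := Dd) hD
      rw [comp_eq_aeval, map_sub]
      have : Polynomial.aeval ((X : Polynomial A) - C Dd) L - Polynomial.aeval (X - C Dd) R
          = L - R + ((Polynomial.aeval (X - C Dd) L - L) - (Polynomial.aeval (X - C Dd) R - R)) := by
        ring
      rw [this]
      rw [show Polynomial.aeval ((X : Polynomial A) - C Dd) L - L = -(L - Polynomial.aeval (X - C Dd) L) by ring]
      rw [show Polynomial.aeval ((X : Polynomial A) - C Dd) R - R = -(R - Polynomial.aeval (X - C Dd) R) by ring]
      rw [hLshift, hRshift]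
      ring
    have heval : (L - R).eval 0 = 0 := by
      have hL0 : L.eval 0 = Cf β Dd (k+2) q := by
        have : L.eval 0 = Polynomial.aeval (0 : A) L := by
          rw [aeval_def, eval₂_at_zero]
          simp [Polynomial.eval]
        rw [this, hL, map_sum]
        have hsimp : ∀ n ∈ Finset.range (k+2),
            Polynomial.aeval (0:A)
              (Af (C β) (C Dd) n (X : Polynomial A) * C (Cf β Dd (k+2-n) q))
            = Af β Dd n 0 * (Cf β Dd (k+2-n) q) := by
          intro n _
          rw [map_mul, Af_aeval', aeval_C, aeval_X]
          simp
        rw [Finset.sum_congr rfl hsimp]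
        rw [Finset.sum_eq_single 0]
        · simp
        · intro m _ hm
          rw [Af_apply_zero _ _ hm, zero_mul]
        · intro h; simp at h
      have hR0 : R.eval 0 = Cf β Dd (k+2) q := by
        have : R.eval 0 = Polynomial.aeval (0 : A) R := by
          rw [aeval_def, eval₂_at_zero]
          simp [Polynomial.eval]
        rw [this, hR, Cf_aeval']
        simp
      rw [Polynomial.eval_sub, hL0, hR0, sub_self]
    rw [heval, map_zero] at hconst
    exact sub_eq_zero.mp hconst

/-- Element-level master (Rothe-type) identity. -/
lemma master (β σ Dd : A) (hD : Dd ≠ 0) (k : ℕ) (p q : A) :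
    ∑ n ∈ Finset.range (k+1), Af β Dd n p * Af (β+σ) Dd (k-n) (q + (n:A)*σ)
      = Af (β+σ) Dd k (p+q) := by
  have := congrArg (Polynomial.aeval p) (masterT β σ Dd hD k q)
  rw [map_sum] at this
  have hsimp : ∀ n ∈ Finset.range (k+1),
      Polynomial.aeval p
        (Af (C β) (C Dd) n (X : Polynomial A) * C (Af (β+σ) Dd (k-n) (q + (n:A)*σ)))
      = Af β Dd n p * Af (β+σ) Dd (k-n) (q + (n:A)*σ) := by
    intro n _
    rw [map_mul, Af_aeval', aeval_C, aeval_X]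
    simp
  rw [Finset.sum_congr rfl hsimp] at this
  rw [this, Af_aeval']
  simp

lemma master0 (β Dd : A) (hD : Dd ≠ 0) (k : ℕ) (p q : A) :
    ∑ n ∈ Finset.range (k+1), Af β Dd n p * Af β Dd (k-n) q = Af β Dd k (p+q) := by
  have := master β 0 Dd hD k p q
  simpa using this

/-- Element-level companion (heart) identity. -/
lemma heart (β Dd : A) (hD : Dd ≠ 0) (k : ℕ) (p q : A) :
    ∑ n ∈ Finset.range (k+1), Af β Dd n p * Cf β Dd (k+1-n) q
      = Cf β Dd (k+1) (p+q) := by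
  have := congrArg (Polynomial.aeval p) (heartT β Dd hD k q)
  rw [map_sum] at this
  have hsimp : ∀ n ∈ Finset.range (k+1),
      Polynomial.aeval p
        (Af (C β) (C Dd) n (X : Polynomial A) * C (Cf β Dd (k+1-n) q))
      = Af β Dd n p * Cf β Dd (k+1-n) q := by
    intro n _
    rw [map_mul, Af_aeval', aeval_C, aeval_X]
    simp
  rw [Finset.sum_congr rfl hsimp] at this
  rw [this, Cf_aeval']
  simp

end SZ

open PowerSeries

/-- **Remark (Sun–Zhang), explicit coefficients of `Φ`.**  Fix positive
integers `a`, `b` and a nonnegative integer `s`.  Let `Ω = 1 + Σ_{n≥1} Ω_n tⁿ`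
be a formal power series with coefficients in `ℚ[x]` satisfying
`Ω' = x Ω^{b+1} + a t Ω^b Ω'`, and let `Φ = 1 + Σ_{n≥1} Φ_n tⁿ` be the (unique)
formal power series with constant term `1` satisfying `Φ(t) = Ω(t Φ(t)^s)`
(expressed coefficientwise: the coefficient of `tᵏ` in `Φ` equals
`Σ_{n≤k} Ω_n ⬝ [t^{k-n}] (Φ^{ns})`, since `(t Φ^s)^n = tⁿ Φ^{ns}`).
Then for every `n ≥ 1`,
`Φ_n = (x/n!) ∏_{i=1}^{n-1} (a i + b x (n-i) + (s n + 1) x)`. -/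
theorem phi_coeff_formula (a b s : ℕ) (ha : 1 ≤ a) (hb : 1 ≤ b)
    (Ω Φ : PowerSeries (Polynomial ℚ))
    (hΩ0 : constantCoeff Ω = 1)
    (hΩ : d⁄dX (Polynomial ℚ) Ω =
      C (Polynomial.X : Polynomial ℚ) * Ω ^ (b + 1) +
        (a : PowerSeries (Polynomial ℚ)) * X * Ω ^ b * d⁄dX (Polynomial ℚ) Ω)
    (hΦ0 : constantCoeff Φ = 1)
    (hΦ : ∀ k : ℕ, coeff k Φ =
      ∑ n ∈ Finset.range (k + 1),
        coeff n Ω * coeff (k - n) (Φ ^ (n * s))) :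
    ∀ n : ℕ, 1 ≤ n →
      coeff n Φ =
        Polynomial.C ((n.factorial : ℚ)⁻¹) * Polynomial.X *
          ∏ i ∈ Finset.Icc 1 (n - 1),
            (Polynomial.C ((a : ℚ) * (i : ℚ)) +
              Polynomial.C ((b : ℚ) * ((n : ℚ) - (i : ℚ))) * Polynomial.X +
              Polynomial.C ((s : ℚ) * (n : ℚ) + 1) * Polynomial.X) := by
  set β : Polynomial ℚ := (a : Polynomial ℚ) with hβ
  set σ : Polynomial ℚ := (s : Polynomial ℚ) * Polynomial.X with hσ
  set Dd : Polynomial ℚ := (a : Polynomial ℚ) - (b : Polynomial ℚ) * Polynomial.X with hDd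
  have hD : Dd ≠ 0 := by
    intro h
    have h0 := congrArg (Polynomial.eval 0) h
    simp [hDd] at h0
    exact absurd h0 (by positivity)
  have hcast : ∀ r : ℕ, ((1*r : ℕ) : Polynomial ℚ) = (r : Polynomial ℚ) := by intro r; push_cast; ring
  -- Coefficients of all powers of Ω
  have claimΩ : ∀ N : ℕ, ∀ r : ℕ,
      coeff N (Ω ^ r) = SZ.Af β Dd N ((r : Polynomial ℚ) * Polynomial.X) := by
    intro N
    induction N using Nat.strong_induction_on with
    | _ N ihN =>
      match N with
      | 0 =>
        intro r
        rw [coeff_zero_eq_constantCoeff_apply, map_pow, hΩ0, one_pow, SZ.Af_zero]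
      | (m+1) =>
        -- first the case r = 1
        have h1 : coeff (m+1) Ω = SZ.Af β Dd (m+1) Polynomial.X := by
          have hode := congrArg (coeff m) hΩ
          rw [PowerSeries.coeff_derivative, map_add, PowerSeries.coeff_C_mul] at hode
          have hrw : (a : PowerSeries (Polynomial ℚ)) * X * Ω ^ b * d⁄dX (Polynomial ℚ) Ω
              = X * (C ((a : ℕ) : Polynomial ℚ) * (Ω ^ b * d⁄dX (Polynomial ℚ) Ω)) := by
            rw [map_natCast (C : Polynomial ℚ →+* PowerSeries (Polynomial ℚ)) a]
            ring
          rw [hrw] at hode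
          match m with
          | 0 =>
            rw [PowerSeries.coeff_zero_X_mul, coeff_zero_eq_constantCoeff_apply, map_pow, hΩ0,
              one_pow, add_zero] at hode
            have : coeff 1 Ω = Polynomial.X := by
              have h2 := hode
              push_cast at h2
              simpa using h2
            rw [this, SZ.Af_one]
          | (u+1) =>
            rw [PowerSeries.coeff_succ_X_mul, PowerSeries.coeff_C_mul, PowerSeries.coeff_mul,
              Finset.Nat.sum_antidiagonal_eq_sum_range_succ_mk] at hode
            have hsum : ∀ n ∈ Finset.range (u+1),
                coeff n (Ω ^ b) * coeff (u - n) (d⁄dX (Polynomial ℚ) Ω)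
                = Polynomial.X * (SZ.Af β Dd n ((b : Polynomial ℚ) * Polynomial.X)
                    * SZ.Cf β Dd (u+1-n) Polynomial.X) := by
              intro n hn
              have hn' : n ≤ u := by simpa [Nat.lt_succ_iff] using hn
              rw [PowerSeries.coeff_derivative]
              rw [ihN n (by omega) b]
              have h3 : coeff (u - n + 1) Ω
                  = SZ.Af β Dd (u - n + 1) Polynomial.X := by
                have := ihN (u - n + 1) (by omega) 1
                simpa using this
              rw [h3]
              have h4 : SZ.Af β Dd (u-n+1) Polynomial.X * ((u - n : ℕ) + 1 : Polynomial ℚ)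
                  = Polynomial.X * SZ.Cf β Dd (u+1-n) Polynomial.X := by
                have h5 : ((u - n + 1 : ℕ) : Polynomial ℚ) * SZ.Af β Dd (u-n+1) Polynomial.X
                    = Polynomial.X * SZ.Cf β Dd (u-n+1) Polynomial.X := SZ.nsmul_Af β Dd _ _
                rw [show u+1-n = u-n+1 by omega]
                rw [← h5]
                push_cast
                ring
              rw [h4]
              ring
            rw [Finset.sum_congr rfl hsum, ← Finset.mul_sum] at hode
            rw [SZ.heart β Dd hD u ((b : Polynomial ℚ) * Polynomial.X) Polynomial.X] at hode
            have harg : (b : Polynomial ℚ) * Polynomial.X + Polynomial.X = Polynomial.X + β - Dd := by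
              rw [hβ, hDd]; ring
            rw [harg] at hode
            have harg2 : coeff (u+1) (Ω ^ (b+1))
                = SZ.Af β Dd (u+1) (Polynomial.X + β - Dd) := by
              rw [ihN (u+1) (by omega) (b+1)]
              congr 1
              rw [hβ, hDd]
              push_cast
              ring
            rw [harg2] at hode
            have hfin : Polynomial.X * SZ.Af β Dd (u+1) (Polynomial.X + β - Dd)
                + (a : Polynomial ℚ) * (Polynomial.X *
                    SZ.Cf β Dd (u+1) (Polynomial.X + β - Dd))
                = SZ.Af β Dd (u+1+1) Polynomial.X * (((u+1 : ℕ) : Polynomial ℚ) + 1) := by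
              have h6 := SZ.star2 β Dd (u+1) Polynomial.X
              have h7 := SZ.nsmul_Af β Dd (u+1+1) Polynomial.X
              have h8 : Polynomial.X * SZ.Af β Dd (u+1) (Polynomial.X + β - Dd)
                  + (a : Polynomial ℚ) * (Polynomial.X * SZ.Cf β Dd (u+1) (Polynomial.X + β - Dd))
                  = Polynomial.X * (SZ.Af β Dd (u+1) (Polynomial.X + β - Dd)
                      + β * SZ.Cf β Dd (u+1) (Polynomial.X + β - Dd)) := by
                rw [hβ]; ring
              rw [h8, h6, ← h7]
              push_cast
              ring
            rw [hfin] at hode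
            have hNe : (((u+1 : ℕ) : Polynomial ℚ) + 1) ≠ 0 := by
              have : (((u+1 : ℕ) : Polynomial ℚ) + 1) = ((u+2 : ℕ) : Polynomial ℚ) := by push_cast; ring
              rw [this]
              exact Nat.cast_ne_zero.mpr (by omega)
            exact mul_right_cancel₀ hNe hode
        have hΩall : ∀ n, n ≤ m+1 → coeff n Ω = SZ.Af β Dd n Polynomial.X := by
          intro n hn
          rcases Nat.lt_or_ge n (m+1) with h | h
          · have := ihN n (by omega) 1
            simpa using this
          · have : n = m+1 := by omega
            rw [this]
            exact h1
        intro r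
        induction r with
        | zero =>
          simp [PowerSeries.coeff_one, SZ.Af_apply_zero]
        | succ r ihr =>
          rw [pow_succ', PowerSeries.coeff_mul, Finset.Nat.sum_antidiagonal_eq_sum_range_succ_mk]
          have hterm : ∀ n ∈ Finset.range (m+2),
              coeff n Ω * coeff (m+1-n) (Ω ^ r)
              = SZ.Af β Dd n Polynomial.X
                  * SZ.Af β Dd (m+1-n) ((r : Polynomial ℚ) * Polynomial.X) := by
            intro n hn
            have hn' : n ≤ m+1 := by simpa [Nat.lt_succ_iff] using hn
            rw [hΩall n hn']
            by_cases h0 : n = 0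
            · subst h0
              simp only [Nat.sub_zero]
              rw [ihr]
            · rw [ihN (m+1-n) (by omega) r]
          rw [Finset.sum_congr rfl hterm,
            SZ.master0 β Dd hD (m+1) Polynomial.X ((r : Polynomial ℚ) * Polynomial.X)]
          congr 1
          push_cast
          ring
  -- Coefficients of all powers of Φ
  have claimΦ : ∀ N : ℕ, ∀ r : ℕ,
      coeff N (Φ ^ r) = SZ.Af (β+σ) Dd N ((r : Polynomial ℚ) * Polynomial.X) := by
    intro N
    induction N using Nat.strong_induction_on with
    | _ N ihN =>
      match N with
      | 0 =>
        intro r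
        rw [coeff_zero_eq_constantCoeff_apply, map_pow, hΦ0, one_pow, SZ.Af_zero]
      | (m+1) =>
        have h1 : coeff (m+1) Φ = SZ.Af (β+σ) Dd (m+1) Polynomial.X := by
          rw [hΦ (m+1)]
          have hterm : ∀ n ∈ Finset.range (m+1+1),
              coeff n Ω * coeff (m+1-n) (Φ ^ (n * s))
              = SZ.Af β Dd n Polynomial.X
                  * SZ.Af (β+σ) Dd (m+1-n) (0 + (n : Polynomial ℚ) * σ) := by
            intro n hn
            have hn' : n ≤ m+1 := by simpa [Nat.lt_succ_iff] using hn
            have hΩn : coeff n Ω = SZ.Af β Dd n Polynomial.X := by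
              have := claimΩ n 1
              simpa using this
            rw [hΩn]
            by_cases h0 : n = 0
            · subst h0
              simp [PowerSeries.coeff_one, SZ.Af_apply_zero]
            · rw [ihN (m+1-n) (by omega) (n*s)]
              congr 1
              rw [hσ]
              push_cast
              ring
          rw [Finset.sum_congr rfl hterm,
            SZ.master β σ Dd hD (m+1) Polynomial.X 0, add_zero]
        have hΦall : ∀ n, n ≤ m+1 → coeff n Φ = SZ.Af (β+σ) Dd n Polynomial.X := by
          intro n hn
          rcases Nat.lt_or_ge n (m+1) with h | h
          · have := ihN n (by omega) 1
            simpa using this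
          · have : n = m+1 := by omega
            rw [this]
            exact h1
        intro r
        induction r with
        | zero =>
          simp [PowerSeries.coeff_one, SZ.Af_apply_zero]
        | succ r ihr =>
          rw [pow_succ', PowerSeries.coeff_mul, Finset.Nat.sum_antidiagonal_eq_sum_range_succ_mk]
          have hterm : ∀ n ∈ Finset.range (m+2),
              coeff n Φ * coeff (m+1-n) (Φ ^ r)
              = SZ.Af (β+σ) Dd n Polynomial.X
                  * SZ.Af (β+σ) Dd (m+1-n) ((r : Polynomial ℚ) * Polynomial.X) := by
            intro n hn
            have hn' : n ≤ m+1 := by simpa [Nat.lt_succ_iff] using hn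
            rw [hΦall n hn']
            by_cases h0 : n = 0
            · subst h0
              simp only [Nat.sub_zero]
              rw [ihr]
            · rw [ihN (m+1-n) (by omega) r]
          rw [Finset.sum_congr rfl hterm,
            SZ.master0 (β+σ) Dd hD (m+1) Polynomial.X ((r : Polynomial ℚ) * Polynomial.X)]
          congr 1
          push_cast
          ring
  -- Final assembly
  intro n hn
  obtain ⟨m, rfl⟩ : ∃ m, n = m + 1 := ⟨n - 1, by omega⟩
  have hc : coeff (m+1) Φ = SZ.Af (β+σ) Dd (m+1) Polynomial.X := by
    have := claimΦ (m+1) 1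
    simpa using this
  rw [hc]
  rw [SZ.Af]
  simp only [Nat.succ_ne_zero, if_false, Nat.add_sub_cancel]
  rw [Polynomial.smul_eq_C_mul, ← mul_assoc]
  congr 1
  refine Finset.prod_nbij' (fun i => (m+1) - i) (fun i => (m+1) - i) ?_ ?_ ?_ ?_ ?_
  · intro i hi
    simp only [Finset.mem_Icc] at hi ⊢
    omega
  · intro i hi
    simp only [Finset.mem_Icc] at hi ⊢
    omega
  · intro i hi
    simp only [Finset.mem_Icc] at hi
    omega
  · intro i hi
    simp only [Finset.mem_Icc] at hi
    omega
  · intro i hi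
    simp only [Finset.mem_Icc] at hi
    have hle : i ≤ m + 1 := by omega
    rw [hβ, hσ, hDd]
    simp only [map_mul, map_add, map_sub, map_natCast, Polynomial.C_1]
    rw [Nat.cast_sub hle]
    push_cast
    ring
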